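/- Consider the 2×2 matrix S_λ with characteristic equation (x−1)(x−1+δ) − λ(q₁x + q₀) = 0, where 0 < δ < 2 and α_eff := −(q₀+q₁)/δ > 0. If q₁ ≤ −α_eff, then both roots are real for all λ > 0. If q₁ > −α_eff, then every non-real root x satisfies |q₁ x + q₀|² = δ² α_eff (α_eff + q₁). -/

import Mathlib

/-- Memory-1 eigenvalue geometry: for the characteristic equation
`(x−1)(x−1+δ) − λ(q₁x + q₀) = 0` with `0 < δ < 2` and `α_eff = −(q₀+q₁)/δ > 0`:
if `q₁ ≤ −α_eff` then all roots are real for every `λ > 0`; if `q₁ > −α_eff` then every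
non-real root `x` satisfies `|q₁ x + q₀|² = δ² α_eff (α_eff + q₁)`. -/
theorem stmt_17 (δ q₀ q₁ : ℝ) (hδ0 : 0 < δ) (hδ2 : δ < 2)
    (hα : 0 < -(q₀ + q₁) / δ) :
    ((q₁ ≤ -(-(q₀ + q₁) / δ)) →
      ∀ lam : ℝ, 0 < lam → ∀ x : ℂ,
        (x - 1) * (x - 1 + (δ : ℂ)) - (lam : ℂ) * ((q₁ : ℂ) * x + (q₀ : ℂ)) = 0 →
        x.im = 0) ∧
    ((q₁ > -(-(q₀ + q₁) / δ)) →
      ∀ lam : ℝ, ∀ x : ℂ,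
        (x - 1) * (x - 1 + (δ : ℂ)) - (lam : ℂ) * ((q₁ : ℂ) * x + (q₀ : ℂ)) = 0 →
        x.im ≠ 0 →
        ‖(q₁ : ℂ) * x + (q₀ : ℂ)‖ ^ 2
          = δ ^ 2 * (-(q₀ + q₁) / δ) * ((-(q₀ + q₁) / δ) + q₁)) := by
  have hδ : δ ≠ 0 := ne_of_gt hδ0
  constructor
  · intro hq lam hlam x hx
    have hq' : q₁ * δ ≤ q₀ + q₁ := by
      rw [neg_div, neg_neg] at hq
      exact (le_div_iff₀ hδ0).mp hq
    rw [Complex.ext_iff] at hx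
    simp [Complex.mul_re, Complex.mul_im] at hx
    obtain ⟨h1, h2⟩ := hx
    have him : x.im * (2*x.re - 2 + δ - lam*q₁) = 0 := by nlinarith [h1, h2]
    have hre : x.im^2 = (x.re-1)*(x.re-1+δ) - lam*(q₁*x.re+q₀) := by nlinarith [h1, h2]
    by_contra hb
    have ha : 2*x.re - 2 + δ - lam*q₁ = 0 := by
      rcases mul_eq_zero.mp him with h | h
      · exact absurd h hb
      · exact h
    have hb2 : 0 < x.im^2 := by positivity
    nlinarith [sq_nonneg (δ + lam*q₁), mul_nonneg hlam.le (by linarith : (0:ℝ) ≤ q₀ + q₁ - q₁*δ)]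
  · intro _ lam x hx hb
    rw [Complex.ext_iff] at hx
    simp [Complex.mul_re, Complex.mul_im] at hx
    obtain ⟨h1, h2⟩ := hx
    have him : x.im * (2*x.re - 2 + δ - lam*q₁) = 0 := by nlinarith [h1, h2]
    have hre : x.im^2 = (x.re-1)*(x.re-1+δ) - lam*(q₁*x.re+q₀) := by nlinarith [h1, h2]
    have ha : 2*x.re - 2 + δ - lam*q₁ = 0 := by
      rcases mul_eq_zero.mp him with h | h
      · exact absurd h hb
      · exact h
    have key : (q₁*x.re+q₀)^2 + (q₁*x.im)^2 = (q₀+q₁)^2 - δ*q₁*(q₀+q₁) := by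
      linear_combination q₁^2 * hre + (q₁^2*x.re + q₀*q₁) * ha
    have hr : δ ^ 2 * (-(q₀ + q₁) / δ) * (-(q₀ + q₁) / δ + q₁)
        = (q₀+q₁)^2 - δ*q₁*(q₀+q₁) := by field_simp; ring
    rw [Complex.sq_norm, Complex.normSq_apply, hr]
    simp [Complex.mul_re, Complex.mul_im]
    linear_combination key
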